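/- Let p be an odd prime dividing m-2, and let F_m(x) = a_1 P_m(x_1) + ... + a_n P_m(x_n) be a primitive m-gonal form (gcd(a_1,...,a_n)=1). Then F_m is universal over ℤ_p: every p-adic integer N is represented by F_m with x_1,...,x_n ∈ ℤ_p. -/

import Mathlib

/-- Let `p` be an odd prime dividing `m-2` and let `a₁,…,aₙ` be positive integers
with `gcd(a₁,…,aₙ) = 1`. Then the `m`-gonal form `a₁P_m(x₁)+⋯+aₙP_m(xₙ)` is
universal over `ℤ_[p]`: every `N ∈ ℤ_[p]` is represented.  (Since `ℤ_[p]` is a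
domain, `Σ aᵢ P_m(xᵢ) = N` is expressed by the equivalent doubled equation
`2N = Σ aᵢ ((m-2)(xᵢ²-xᵢ) + 2xᵢ)`, avoiding division by `2`.) -/

theorem mgonal_universal_padic_odd_dvd (p : ℕ) [Fact p.Prime] (hp : Odd p)
    (m : ℤ) (hm : 3 ≤ m) (hdvd : (p : ℤ) ∣ (m - 2))
    (n : ℕ) (a : Fin n → ℤ) (ha : ∀ i, 0 < a i)
    (hprim : Finset.univ.gcd a = 1) (N : ℤ_[p]) :
    ∃ x : Fin n → ℤ_[p],
      2 * N = ∑ i, (a i : ℤ_[p]) *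
        (((m : ℤ_[p]) - 2) * ((x i) ^ 2 - x i) + 2 * x i) := by
  classical
  have hpp : p.Prime := Fact.out
  -- find j with p ∤ a j
  have hj : ∃ j, ¬ (p:ℤ) ∣ a j := by
    by_contra h
    push_neg at h
    have : (p:ℤ) ∣ Finset.univ.gcd a := Finset.dvd_gcd (fun i _ => h i)
    rw [hprim] at this
    have := Int.le_of_dvd one_pos this
    have h2 := hpp.two_le
    omega
  obtain ⟨j, hj⟩ := hj
  -- p ∤ 2 * a j
  have hpI : Prime (p:ℤ) := Nat.prime_iff_prime_int.mp hpp
  have hnd : ¬ (p:ℤ) ∣ 2 * a j := by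
    intro h
    rcases hpI.dvd_mul.mp h with h2 | h2
    · have := Int.le_of_dvd (by norm_num) h2
      have h2le := hpp.two_le
      have hp2 : p = 2 := by omega
      rw [hp2] at hp
      exact (Nat.not_odd_iff_even.mpr even_two) hp
    · exact hj h2
  have hu : IsUnit ((2 * a j : ℤ) : ℤ_[p]) := by
    rw [PadicInt.isUnit_iff]
    have h1 : ‖((2 * a j : ℤ) : ℤ_[p])‖ ≤ 1 := PadicInt.norm_le_one _
    have h2 : ¬ ‖((2 * a j : ℤ) : ℤ_[p])‖ < 1 := by
      rw [PadicInt.norm_int_lt_one_iff_dvd]; exact hnd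
    linarith [lt_or_eq_of_le h1]
  set c : ℤ_[p] := ((a j : ℤ) : ℤ_[p]) with hc
  set d : ℤ_[p] := ((m : ℤ_[p]) - 2) with hd
  have hdn : ‖d‖ < 1 := by
    have hde : d = (((m - 2 : ℤ)) : ℤ_[p]) := by rw [hd]; push_cast; ring
    rw [hde, PadicInt.norm_int_lt_one_iff_dvd]; exact hdvd
  set w : ℤ_[p] := ↑(hu.unit⁻¹) with hwdef
  have hw : ((2 * a j : ℤ) : ℤ_[p]) * w = 1 := by
    have := hu.unit.mul_inv
    rwa [IsUnit.unit_spec hu] at this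
  have hca : ((2 * a j : ℤ) : ℤ_[p]) = 2 * c := by rw [hc]; push_cast; ring
  set x₀ : ℤ_[p] := w * (2 * N) with hx0
  set F : Polynomial ℤ_[p] :=
    Polynomial.C (c * d) * Polynomial.X ^ 2 +
      Polynomial.C (2 * c - c * d) * Polynomial.X - Polynomial.C (2 * N) with hF
  have hFeval : ∀ z : ℤ_[p], F.eval z = c * d * z ^ 2 + (2 * c - c * d) * z - 2 * N := by
    intro z; simp [hF]
  have hFderiv : ∀ z : ℤ_[p], F.derivative.eval z = 2 * c + c * d * (2 * z - 1) := by
    intro z; simp [hF]; ring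
  have h2c : ‖2 * c‖ = 1 := by rw [← hca]; exact PadicInt.isUnit_iff.mp hu
  have h2cx : 2 * c * x₀ = 2 * N := by
    rw [hx0, ← hca]
    calc ((2 * a j : ℤ) : ℤ_[p]) * (w * (2 * N))
        = (((2 * a j : ℤ) : ℤ_[p]) * w) * (2 * N) := by ring
      _ = 2 * N := by rw [hw]; ring
  have hevalx0 : F.eval x₀ = c * d * (x₀ ^ 2 - x₀) := by
    rw [hFeval]; linear_combination h2cx
  have hsmall : ∀ s : ℤ_[p], ‖c * d * s‖ < 1 := by
    intro s
    rw [norm_mul, norm_mul]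
    calc ‖c‖ * ‖d‖ * ‖s‖ ≤ 1 * ‖d‖ * 1 := by
          apply mul_le_mul (mul_le_mul (PadicInt.norm_le_one c) le_rfl (norm_nonneg d) zero_le_one)
            (PadicInt.norm_le_one s) (norm_nonneg s)
          positivity
      _ = ‖d‖ := by ring
      _ < 1 := hdn
  have hderiv1 : ‖F.derivative.eval x₀‖ = 1 := by
    rw [hFderiv]
    rw [PadicInt.norm_add_eq_max_of_ne (by rw [h2c]; exact ne_of_gt (by simpa [h2c] using hsmall (2 * x₀ - 1)))]
    simp [h2c]
    exact le_of_lt (by simpa using hsmall (2 * x₀ - 1))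
  have hnorm : ‖F.eval x₀‖ < ‖F.derivative.eval x₀‖ ^ 2 := by
    rw [hderiv1, hevalx0]; simpa using hsmall (x₀ ^ 2 - x₀)
  obtain ⟨z, hz, -⟩ := hensels_lemma hnorm
  rw [Polynomial.coe_aeval_eq_eval, hFeval] at hz
  refine ⟨fun i => if i = j then z else 0, ?_⟩
  rw [Finset.sum_eq_single j ?_ (by simp)]
  · simp only [if_pos]
    linear_combination -hz
  · intro i _ hij
    simp [hij]
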